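/- Let ρ be a density state of finite rank k. Then Tr(ρ²) equals the maximum of Σᵢ λᵢ² over all decompositions ρ = Σᵢ₌₁ᵏ λᵢρᵢ of ρ as a convex combination of k pure states ρ₁,…,ρ_k, and this maximum is attained by the spectral decomposition (mutually orthogonal pure states). -/

import Mathlib

open scoped ComplexOrder

/-- A pure state: a rank-one orthogonal projection. -/
def IsPureState {n : ℕ} (ρ : Matrix (Fin n) (Fin n) ℂ) : Prop :=
  ρ.IsHermitian ∧ ρ * ρ = ρ ∧ ρ.trace = 1

lemma aux_sum_subtype {α M : Type*} [Fintype α] [AddCommMonoid M] (p : α → Prop)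
    [DecidablePred p] (f : α → M) (hf : ∀ i, ¬ p i → f i = 0) :
    ∑ s : {i // p i}, f s.1 = ∑ i, f i := by
  rw [← Finset.sum_subtype (Finset.univ.filter p) (by simp) f]
  exact Finset.sum_filter_of_ne (fun i _ h => by by_contra hp; exact h (hf i hp))

lemma aux_psd_trace_nonneg {m : ℕ} {A : Matrix (Fin m) (Fin m) ℂ} (hA : A.PosSemidef) :
    0 ≤ A.trace := by
  refine Finset.sum_nonneg fun p _ => ?_
  have := hA.diag_nonneg (i := p)
  simpa [dotProduct, Matrix.mulVec_single, Pi.single_apply] using this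

lemma aux_pure_psd {m : ℕ} {σ : Matrix (Fin m) (Fin m) ℂ} (h : IsPureState σ) :
    σ.PosSemidef := by
  have h' : σ.conjTranspose * σ = σ := by rw [h.1.eq, h.2.1]
  exact h' ▸ Matrix.posSemidef_conjTranspose_mul_self σ

open scoped MatrixOrder in
lemma aux_psd_trace_mul_nonneg {m : ℕ} {A B : Matrix (Fin m) (Fin m) ℂ}
    (hA : A.PosSemidef) (hB : B.PosSemidef) : 0 ≤ (A * B).trace := by
  have h2 : (A * B).trace = (CFC.sqrt B * A * CFC.sqrt B).trace := by
    conv_lhs => rw [← CFC.sqrt_mul_sqrt_self B hB.nonneg, ← mul_assoc]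
    rw [Matrix.trace_mul_cycle]
  have h3 : (CFC.sqrt B * A * CFC.sqrt B).PosSemidef := by
    have := hA.mul_mul_conjTranspose_same (CFC.sqrt B)
    rwa [(Matrix.nonneg_iff_posSemidef.mp (CFC.sqrt_nonneg B)).isHermitian.eq] at this
  rw [h2]; exact aux_psd_trace_nonneg h3

namespace Stmt10Aux
open Matrix

variable {n : ℕ} {ρ : Matrix (Fin n) (Fin n) ℂ}

noncomputable def U (hH : ρ.IsHermitian) : Matrix (Fin n) (Fin n) ℂ :=
  hH.eigenvectorUnitary

noncomputable def P (hH : ρ.IsHermitian) (i : Fin n) : Matrix (Fin n) (Fin n) ℂ :=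
  U hH * Matrix.diagonal (Pi.single i 1) * star (U hH)

lemma spectral' (hH : ρ.IsHermitian) :
    ρ = U hH * Matrix.diagonal (RCLike.ofReal ∘ hH.eigenvalues) * star (U hH) :=
  hH.spectral_theorem

lemma star_U_mul_U (hH : ρ.IsHermitian) : star (U hH) * U hH = 1 :=
  Matrix.mem_unitaryGroup_iff'.mp hH.eigenvectorUnitary.2

lemma trace_conj (hH : ρ.IsHermitian) (w : Fin n → ℂ) :
    (U hH * Matrix.diagonal w * star (U hH)).trace = ∑ i, w i := by
  rw [Matrix.trace_mul_cycle, star_U_mul_U hH, one_mul, Matrix.trace_diagonal]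

lemma conj_mul_conj (hH : ρ.IsHermitian) (w v : Fin n → ℂ) :
    (U hH * Matrix.diagonal w * star (U hH)) * (U hH * Matrix.diagonal v * star (U hH))
      = U hH * Matrix.diagonal (w * v) * star (U hH) := by
  calc (U hH * Matrix.diagonal w * star (U hH)) * (U hH * Matrix.diagonal v * star (U hH))
      = U hH * Matrix.diagonal w * ((star (U hH) * U hH) * (Matrix.diagonal v * star (U hH))) := by
        simp only [mul_assoc]
    _ = U hH * (Matrix.diagonal w * Matrix.diagonal v) * star (U hH) := by
        rw [star_U_mul_U hH, one_mul]; simp only [mul_assoc]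
    _ = _ := by rw [show w * v = fun i => w i * v i from rfl, Matrix.diagonal_mul_diagonal]

lemma single_mul_single (i j : Fin n) :
    (Pi.single i 1 : Fin n → ℂ) * (Pi.single j 1 : Fin n → ℂ)
      = if i = j then (Pi.single i 1 : Fin n → ℂ) else 0 := by
  funext x
  by_cases h : i = j
  · subst h
    by_cases hx : x = i <;> simp [Pi.single_apply, hx]
  · rw [if_neg h]
    simp only [Pi.mul_apply, Pi.single_apply, Pi.zero_apply]
    rcases eq_or_ne x i with hx | hx
    · rw [if_pos hx, if_neg (by subst hx; exact h), one_mul]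
    · rw [if_neg hx, zero_mul]

lemma P_herm (hH : ρ.IsHermitian) (i : Fin n) : (P hH i).IsHermitian := by
  unfold P
  unfold Matrix.IsHermitian
  rw [conjTranspose_mul, conjTranspose_mul, diagonal_conjTranspose]
  have : star (Pi.single i 1 : Fin n → ℂ) = (Pi.single i 1 : Fin n → ℂ) := by
    funext x; simp [Pi.single_apply, apply_ite]
  rw [this, ← Matrix.star_eq_conjTranspose, ← Matrix.star_eq_conjTranspose, star_star]
  simp only [mul_assoc]

lemma P_pure (hH : ρ.IsHermitian) (i : Fin n) : IsPureState (P hH i) := by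
  refine ⟨P_herm hH i, ?_, ?_⟩
  · unfold P
    rw [conj_mul_conj, single_mul_single i i, if_pos rfl]
  · unfold P
    rw [trace_conj]
    simp

lemma P_ortho (hH : ρ.IsHermitian) {i j : Fin n} (hij : i ≠ j) :
    (P hH i * P hH j).trace = 0 := by
  unfold P
  rw [conj_mul_conj, single_mul_single i j, if_neg hij]
  simp [trace_conj hH]

lemma spectral_sum (hH : ρ.IsHermitian) :
    ρ = ∑ i, (hH.eigenvalues i : ℂ) • P hH i := by
  have hdiag : ∑ i, (hH.eigenvalues i : ℂ) • Matrix.diagonal (Pi.single i (1:ℂ))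
      = Matrix.diagonal (RCLike.ofReal ∘ hH.eigenvalues) := by
    ext p q
    rw [Matrix.sum_apply]
    by_cases h : p = q
    · subst h
      simp [Matrix.diagonal_apply, Pi.single_apply, Finset.sum_ite_eq', eq_comm]
    · simp [Matrix.diagonal_apply_ne _ h]
  calc ρ = U hH * Matrix.diagonal (RCLike.ofReal ∘ hH.eigenvalues) * star (U hH) :=
        hH.spectral_theorem
    _ = ∑ i, (hH.eigenvalues i : ℂ) • P hH i := by
        rw [← hdiag, Finset.mul_sum, Finset.sum_mul]
        refine Finset.sum_congr rfl fun i _ => ?_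
        unfold P
        rw [Matrix.mul_smul, Matrix.smul_mul]

lemma trace_sq (hH : ρ.IsHermitian) :
    (ρ * ρ).trace = ((∑ i, (hH.eigenvalues i) ^ 2 : ℝ) : ℂ) := by
  conv_lhs => rw [spectral' hH]
  rw [conj_mul_conj, trace_conj]
  push_cast
  refine Finset.sum_congr rfl fun i _ => ?_
  simp [pow_two]

end Stmt10Aux

theorem stmt_10 (n k : ℕ)
    (ρ : Matrix (Fin n) (Fin n) ℂ)
    (hρ : ρ.PosSemidef) (htr : ρ.trace = 1) (hrk : ρ.rank = k) :
    ∃ t₀ : ℝ, (ρ * ρ).trace = (t₀ : ℂ) ∧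
      IsGreatest
        {t : ℝ | ∃ (l : Fin k → ℝ) (σ : Fin k → Matrix (Fin n) (Fin n) ℂ),
          (∀ i, 0 ≤ l i) ∧ (∑ i, l i) = 1 ∧ (∀ i, IsPureState (σ i)) ∧
          ρ = ∑ i, (l i : ℂ) • σ i ∧ t = ∑ i, (l i) ^ 2} t₀ ∧
      ∃ (l : Fin k → ℝ) (σ : Fin k → Matrix (Fin n) (Fin n) ℂ),
        (∀ i, 0 ≤ l i) ∧ (∑ i, l i) = 1 ∧ (∀ i, IsPureState (σ i)) ∧
        ρ = ∑ i, (l i : ℂ) • σ i ∧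
        (∀ i j, i ≠ j → (σ i * σ j).trace = 0) ∧
        (∑ i, (l i) ^ 2) = t₀ := by
  classical
  have hH := hρ.1
  set d : Fin n → ℝ := hH.eigenvalues with hd
  set t₀ : ℝ := ∑ i, d i ^ 2 with ht₀
  -- the equivalence with nonzero eigenvalues
  have hcard : Fintype.card {i // d i ≠ 0} = k := by
    rw [← hH.rank_eq_card_non_zero_eigs, hrk]
  let e : Fin k ≃ {i // d i ≠ 0} := (Fintype.equivFinOfCardEq hcard).symm
  have key : ∀ {M : Type} [AddCommMonoid M] (f : Fin n → M), (∀ i, d i = 0 → f i = 0) →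
      ∑ j : Fin k, f ((e j) : Fin n) = ∑ i, f i := by
    intro M _ f hf
    rw [← aux_sum_subtype (fun i => d i ≠ 0) f (fun i hi => hf i (not_not.mp hi))]
    exact Equiv.sum_comp e (fun s => f s.1)
  -- the spectral decomposition
  set l : Fin k → ℝ := fun j => d (e j) with hl
  set σ : Fin k → Matrix (Fin n) (Fin n) ℂ := fun j => Stmt10Aux.P hH ((e j) : Fin n) with hσ
  have hl0 : ∀ j, 0 ≤ l j := fun j => hρ.eigenvalues_nonneg _
  have htrace_eq : ρ.trace = ∑ i, (d i : ℂ) := by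
    conv_lhs => rw [Stmt10Aux.spectral' hH]
    rw [Stmt10Aux.trace_conj]
    rfl
  have hsumd : ∑ i, d i = 1 := by
    have : ((∑ i, d i : ℝ) : ℂ) = 1 := by push_cast; rw [← htrace_eq, htr]
    exact_mod_cast this
  have hsum : ∑ j, l j = 1 := by
    rw [hl]
    rw [key (fun i => d i) (fun i h => h)]
    exact hsumd
  have hpure : ∀ j, IsPureState (σ j) := fun j => Stmt10Aux.P_pure hH _
  have hdecomp : ρ = ∑ j, (l j : ℂ) • σ j := by
    rw [hl, hσ]
    rw [key (fun i => (d i : ℂ) • Stmt10Aux.P hH i) (fun i h => by simp [h])]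
    exact Stmt10Aux.spectral_sum hH
  have hortho : ∀ i j, i ≠ j → (σ i * σ j).trace = 0 := by
    intro i j hij
    refine Stmt10Aux.P_ortho hH (fun h => hij ?_)
    exact e.injective (Subtype.ext h)
  have hsq : ∑ j, l j ^ 2 = t₀ := by
    rw [hl, ht₀]
    exact key (fun i => d i ^ 2) (fun i h => by simp [h])
  have htr2 : (ρ * ρ).trace = (t₀ : ℂ) := Stmt10Aux.trace_sq hH
  refine ⟨t₀, htr2, ⟨⟨l, σ, hl0, hsum, hpure, hdecomp, hsq.symm⟩, ?_⟩,
    l, σ, hl0, hsum, hpure, hdecomp, hortho, hsq⟩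
  -- upper bound
  rintro t ⟨m, τ, hm0, hmsum, hτpure, hdec, ht⟩
  set R : Fin k → Fin k → ℝ := fun i j => ((τ i * τ j).trace).re with hR
  have hnn : ∀ i j, (0 : ℂ) ≤ (τ i * τ j).trace := fun i j =>
    aux_psd_trace_mul_nonneg (aux_pure_psd (hτpure i)) (aux_pure_psd (hτpure j))
  have hR0 : ∀ i j, 0 ≤ R i j := by
    intro i j
    simpa using (Complex.le_def.mp (hnn i j)).1
  have hRreal : ∀ i j, (τ i * τ j).trace = ((R i j : ℝ) : ℂ) := by
    intro i j
    have him := (Complex.le_def.mp (hnn i j)).2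
    apply Complex.ext
    · simp [hR]
    · simp [hR, ← him]
  have hRdiag : ∀ i, R i i = 1 := by
    intro i
    rw [hR]
    simp only
    rw [(hτpure i).2.1, (hτpure i).2.2]
    simp
  have hexp : (ρ * ρ).trace = ∑ i, ∑ j, ((m i : ℂ) * (m j : ℂ)) * (τ i * τ j).trace := by
    conv_lhs => rw [hdec]
    rw [Finset.sum_mul_sum, Matrix.trace_sum]
    refine Finset.sum_congr rfl fun i _ => ?_
    rw [Matrix.trace_sum]
    refine Finset.sum_congr rfl fun j _ => ?_
    rw [Matrix.smul_mul, Matrix.mul_smul, smul_smul, Matrix.trace_smul, smul_eq_mul]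
  have hreal : t₀ = ∑ i, ∑ j, m i * m j * R i j := by
    have : ((t₀ : ℝ) : ℂ) = ∑ i, ∑ j, ((m i * m j * R i j : ℝ) : ℂ) := by
      rw [← htr2, hexp]
      refine Finset.sum_congr rfl fun i _ => Finset.sum_congr rfl fun j _ => ?_
      rw [hRreal i j]; push_cast; ring
    exact_mod_cast this
  rw [ht, hreal]
  refine Finset.sum_le_sum fun i _ => ?_
  have : m i ^ 2 = m i * m i * R i i := by rw [hRdiag i]; ring
  rw [this]
  exact Finset.single_le_sum (f := fun j => m i * m j * R i j)
    (fun j _ => mul_nonneg (mul_nonneg (hm0 i) (hm0 j)) (hR0 i j)) (Finset.mem_univ i)
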